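/- Let H be a hereditary graph property closed under union with K₁, G a graph, and e an edge with γ_H(G) = γ_H(G − e) + 1. Then γ_H(G_{e,1}) = γ_H(G_{e,2}) = γ_H(G) − 1, γ_H(G_{e,3}) = γ_H(G_{e,4}) = γ_H(G_{e,5}) = γ_H(G), and γ_H(G_{e,6}) = γ_H(G) + 1. -/

import Mathlib

open SimpleGraph

/-- A graph property: a class of finite simple graphs on arbitrary vertex types. -/
abbrev GraphProp := ∀ (V : Type), SimpleGraph V → Prop

/-- Closure under graph isomorphism. -/
def IsoClosed (P : GraphProp) : Prop :=
  ∀ (V W : Type) (G : SimpleGraph V) (H : SimpleGraph W), Nonempty (G ≃g H) → P V G → P W H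

/-- A property is nondegenerate if it contains all edgeless graphs. -/
def Nondegenerate (P : GraphProp) : Prop :=
  IsoClosed P ∧ ∀ (V : Type), P V ⊥

/-- Closed under induced subgraphs. -/
def InducedHereditary (P : GraphProp) : Prop :=
  IsoClosed P ∧ ∀ (V : Type) (G : SimpleGraph V) (s : Set V), P V G → P s (G.induce s)

/-- Closed under all subgraphs. -/
def Hereditary (P : GraphProp) : Prop :=
  InducedHereditary P ∧ ∀ (V : Type) (G G' : SimpleGraph V), G' ≤ G → P V G → P V G'

/-- The graph `G` together with one new isolated vertex. -/
def addK1 {V : Type} (G : SimpleGraph V) : SimpleGraph (V ⊕ Unit) where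
  Adj a b := ∃ x y, a = Sum.inl x ∧ b = Sum.inl y ∧ G.Adj x y
  symm := by refine ⟨?_⟩; rintro a b ⟨x, y, rfl, rfl, h⟩; exact ⟨y, x, rfl, rfl, h.symm⟩
  loopless := by refine ⟨?_⟩; rintro a ⟨x, y, rfl, hy, h⟩; simp only [Sum.inl.injEq] at hy; subst hy; exact G.loopless.irrefl _ h

/-- Closure under disjoint union with `K₁`. -/
def ClosedUnderK1 (P : GraphProp) : Prop :=
  ∀ (V : Type) (G : SimpleGraph V), P V G → P (V ⊕ Unit) (addK1 G)

/-- `S` is a dominating set of `G`. -/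
def IsDominating {V : Type} (G : SimpleGraph V) (S : Set V) : Prop :=
  ∀ v ∉ S, ∃ u ∈ S, G.Adj u v

/-- `S` is a dominating set inducing a subgraph with property `P`. -/
def IsDomPSet (P : GraphProp) {V : Type} (G : SimpleGraph V) (S : Set V) : Prop :=
  IsDominating G S ∧ P S (G.induce S)

/-- The domination number with respect to the property `P`. -/
noncomputable def gammaP (P : GraphProp) {V : Type} [Fintype V] (G : SimpleGraph V) : ℕ :=
  sInf (Set.ncard '' {S : Set V | IsDomPSet P G S})

/-- A minimum dominating `P`-set. -/
def IsGammaSet (P : GraphProp) {V : Type} [Fintype V] (G : SimpleGraph V) (S : Set V) : Prop :=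
  IsDomPSet P G S ∧ S.ncard = gammaP P G

/-- The ordinary domination number. -/
noncomputable def gamma {V : Type} [Fintype V] (G : SimpleGraph V) : ℕ :=
  sInf (Set.ncard '' {S : Set V | IsDominating G S})

/-- The graph obtained from `G` by deleting the edge `uv` and replacing it by the
path `u - x₀ - x₁ - ⋯ - x_{t-1} - v` through `t` new vertices. -/
def subdiv {V : Type} (G : SimpleGraph V) (u v : V) (t : ℕ) : SimpleGraph (V ⊕ Fin t) where
  Adj a b := match a, b with
    | Sum.inl a, Sum.inl b => G.Adj a b ∧ ¬((a = u ∧ b = v) ∨ (a = v ∧ b = u))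
    | Sum.inl a, Sum.inr i => (a = u ∧ (i : ℕ) = 0) ∨ (a = v ∧ (i : ℕ) + 1 = t)
    | Sum.inr i, Sum.inl a => (a = u ∧ (i : ℕ) = 0) ∨ (a = v ∧ (i : ℕ) + 1 = t)
    | Sum.inr i, Sum.inr j => (i : ℕ) + 1 = (j : ℕ) ∨ (j : ℕ) + 1 = (i : ℕ)
  symm := by
    refine ⟨?_⟩
    rintro (a | i) (b | j) h
    · exact ⟨h.1.symm, fun hc => h.2 (by tauto)⟩
    · exact h
    · exact h
    · tauto
  loopless := by
    refine ⟨?_⟩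
    rintro (a | i) h
    · exact G.loopless.irrefl a h.1
    · omega

/-- The private neighbour set `pn_G[x, X] = {y : N[y,G] ∩ X = {x}}`. -/
def pn {V : Type} (G : SimpleGraph V) (X : Set V) (x : V) : Set V :=
  {y | insert y (G.neighborSet y) ∩ X = {x}}

/-- The graph `G` with the vertex `v` deleted. -/
abbrev delVert {V : Type} (G : SimpleGraph V) (v : V) : SimpleGraph {w : V // w ≠ v} :=
  G.induce {w : V | w ≠ v}

/-- An independent set. -/
def IsIndep {V : Type} (G : SimpleGraph V) (S : Set V) : Prop :=
  S.Pairwise fun a b => ¬ G.Adj a b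

section Helpers

variable {P : GraphProp}

lemma isoP (hP : IsoClosed P) {V W : Type} {G : SimpleGraph V} {H : SimpleGraph W}
    (e : G ≃g H) : P V G → P W H := fun h => hP V W G H ⟨e⟩ h

lemma P_induce_subset (h1 : Hereditary P) {W : Type} (F : SimpleGraph W) {r s : Set W}
    (hrs : r ⊆ s) (hs : P s (F.induce s)) : P r (F.induce r) := by
  have h2 := h1.1.2 s (F.induce s) {x : s | (x : W) ∈ r} hs
  exact isoP h1.1.1
    ⟨⟨fun x => ⟨x.1.1, x.2⟩, fun y => ⟨⟨y.1, hrs y.2⟩, y.2⟩, fun x => rfl, fun y => rfl⟩,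
      Iff.rfl⟩ h2

lemma P_insert_isolated (h1 : Hereditary P) (h2 : ClosedUnderK1 P) {W : Type}
    (F : SimpleGraph W) {C : Set W} {x : W} (hx : x ∉ C)
    (hiso : ∀ c ∈ C, ¬ F.Adj x c) (hP : P C (F.induce C)) :
    P ↑(insert x C) (F.induce (insert x C)) := by
  classical
  have hk := h2 C (F.induce C) hP
  refine isoP h1.1.1
    ⟨⟨fun a => Sum.elim (fun c => ⟨c.1, Or.inr c.2⟩) (fun _ => ⟨x, Or.inl rfl⟩) a,
      fun y => if h : (y : W) ∈ C then Sum.inl ⟨y, h⟩ else Sum.inr (), ?_, ?_⟩, ?_⟩ hk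
  · rintro (c | u)
    · simp [c.2]
    · simp [hx]
  · rintro ⟨y, hy⟩
    rcases hy with rfl | hy
    · simp [hx]
    · simp [hy]
  · rintro (c | w) (d | w')
    · constructor
      · rintro h; exact ⟨c, d, rfl, rfl, h⟩
      · rintro ⟨p, q, hp, hq, h⟩
        cases hp; cases hq; exact h
    · constructor
      · rintro h; exact absurd h (fun hh => hiso c.1 c.2 hh.symm)
      · rintro ⟨p, q, hp, hq, h⟩; cases hq
    · constructor
      · rintro h; exact absurd h (hiso d.1 d.2)
      · rintro ⟨p, q, hp, hq, h⟩; cases hp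
    · constructor
      · rintro h; exact (F.loopless.irrefl x h).elim
      · rintro ⟨p, q, hp, hq, h⟩; cases hp

end Helpers
section Lift

variable {V : Type} {G : SimpleGraph V} {u v : V}

lemma subdiv_adj_inl_inl {t : ℕ} {a b : V} :
    (subdiv G u v t).Adj (Sum.inl a) (Sum.inl b) ↔
      G.Adj a b ∧ ¬((a = u ∧ b = v) ∨ (a = v ∧ b = u)) := Iff.rfl

lemma subdiv_adj_inl_inr {t : ℕ} {a : V} {i : Fin t} :
    (subdiv G u v t).Adj (Sum.inl a) (Sum.inr i) ↔
      (a = u ∧ (i : ℕ) = 0) ∨ (a = v ∧ (i : ℕ) + 1 = t) := Iff.rfl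

lemma subdiv_adj_inr_inl {t : ℕ} {a : V} {i : Fin t} :
    (subdiv G u v t).Adj (Sum.inr i) (Sum.inl a) ↔
      (a = u ∧ (i : ℕ) = 0) ∨ (a = v ∧ (i : ℕ) + 1 = t) := Iff.rfl

lemma subdiv_adj_inr_inr {t : ℕ} {i j : Fin t} :
    (subdiv G u v t).Adj (Sum.inr i) (Sum.inr j) ↔
      (i : ℕ) + 1 = (j : ℕ) ∨ (j : ℕ) + 1 = (i : ℕ) := Iff.rfl

lemma del_adj {a b : V} :
    (G.deleteEdges {s(u, v)}).Adj a b ↔ G.Adj a b ∧ ¬((a = u ∧ b = v) ∨ (a = v ∧ b = u)) := by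
  rw [SimpleGraph.deleteEdges_adj]
  simp [Sym2.eq_iff]

/-- Lift a set of original vertices into the subdivided graph. -/
def liftSet {V : Type} (s : Set V) (t : ℕ) : Set (V ⊕ Fin t) :=
  {x | ∃ w ∈ s, x = Sum.inl w}

lemma mem_liftSet_inl {s : Set V} {t : ℕ} {w : V} : Sum.inl w ∈ liftSet s t ↔ w ∈ s := by
  constructor
  · rintro ⟨w', hw', h⟩; cases h; exact hw'
  · exact fun h => ⟨w, h, rfl⟩

lemma mem_liftSet_inr {s : Set V} {t : ℕ} {i : Fin t} : Sum.inr i ∉ liftSet s t := by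
  rintro ⟨w, hw, h⟩; cases h

lemma liftSet_eq_image {s : Set V} {t : ℕ} : liftSet s t = Sum.inl '' s := by
  ext x; constructor
  · rintro ⟨w, hw, rfl⟩; exact ⟨w, hw, rfl⟩
  · rintro ⟨w, hw, rfl⟩; exact ⟨w, hw, rfl⟩

lemma ncard_liftSet {s : Set V} {t : ℕ} : (liftSet s t).ncard = s.ncard := by
  rw [liftSet_eq_image]
  exact Set.ncard_image_of_injective s Sum.inl_injective

/-- The isomorphism between an induced subgraph of `G - uv` and the corresponding
induced subgraph of the subdivision. -/
noncomputable def liftIso (G : SimpleGraph V) (u v : V) (t : ℕ) (s : Set V) :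
    ((G.deleteEdges {s(u, v)}).induce s) ≃g ((subdiv G u v t).induce (liftSet s t)) := by
  refine ⟨⟨fun a => ⟨Sum.inl a.1, a.1, a.2, rfl⟩,
    fun y => match y with
      | ⟨Sum.inl w, h⟩ => ⟨w, mem_liftSet_inl.1 h⟩
      | ⟨Sum.inr i, h⟩ => absurd h mem_liftSet_inr, ?_, ?_⟩, ?_⟩
  · rintro ⟨a, ha⟩; rfl
  · rintro ⟨(w | i), h⟩
    · rfl
    · exact absurd h mem_liftSet_inr
  · rintro ⟨a, ha⟩ ⟨b, hb⟩
    show (subdiv G u v t).Adj (Sum.inl a) (Sum.inl b) ↔ (G.deleteEdges {s(u, v)}).Adj a b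
    rw [subdiv_adj_inl_inl, del_adj]

end Lift
section Gamma

variable {P : GraphProp} {V : Type} [Fintype V]

lemma gammaP_le {G : SimpleGraph V} {S : Set V} (hS : IsDomPSet P G S) :
    gammaP P G ≤ S.ncard := Nat.sInf_le ⟨S, hS, rfl⟩

lemma exists_gammaSet {G : SimpleGraph V} (hne : {S : Set V | IsDomPSet P G S}.Nonempty) :
    ∃ S : Set V, IsDomPSet P G S ∧ S.ncard = gammaP P G := by
  have := Nat.sInf_mem (hne.image Set.ncard)
  obtain ⟨S, hS, hcard⟩ := this
  exact ⟨S, hS, hcard⟩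

omit [Fintype V] in
lemma induce_del_eq {G : SimpleGraph V} {u v : V} {B : Set V} (h : u ∉ B ∨ v ∉ B) :
    (G.deleteEdges {s(u, v)}).induce B = G.induce B := by
  ext ⟨a, ha⟩ ⟨b, hb⟩
  show (G.deleteEdges {s(u, v)}).Adj a b ↔ G.Adj a b
  rw [del_adj]
  constructor
  · exact fun hh => hh.1
  · intro hadj
    refine ⟨hadj, ?_⟩
    rintro (⟨rfl, rfl⟩ | ⟨rfl, rfl⟩) <;> tauto

lemma exists_S0 {P : GraphProp} (h1 : Hereditary P) (h2 : ClosedUnderK1 P)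
    (G : SimpleGraph V) (u v : V) (he : G.Adj u v)
    (hcond : gammaP P G = gammaP P (G.deleteEdges {s(u, v)}) + 1) :
    ∃ S₀ : Set V, IsDomPSet P (G.deleteEdges {s(u, v)}) S₀ ∧
      S₀.ncard = gammaP P (G.deleteEdges {s(u, v)}) ∧ u ∈ S₀ ∧ v ∈ S₀ := by
  set G' := G.deleteEdges {s(u, v)} with hG'
  have hune : u ≠ v := G.ne_of_adj he
  have hne' : {S : Set V | IsDomPSet P G' S}.Nonempty := by
    by_contra hcon
    rw [Set.not_nonempty_iff_eq_empty] at hcon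
    have hγ' : gammaP P G' = 0 := by
      unfold gammaP; rw [hcon]; simp
    have hγ : gammaP P G = 1 := by rw [hcond, hγ']
    have hGne : {S : Set V | IsDomPSet P G S}.Nonempty := by
      by_contra h2'
      rw [Set.not_nonempty_iff_eq_empty] at h2'
      unfold gammaP at hγ; rw [h2'] at hγ; simp at hγ
    obtain ⟨S, hS, hcard⟩ := exists_gammaSet hGne
    rw [hγ] at hcard
    obtain ⟨w, rfl⟩ := Set.ncard_eq_one.1 hcard
    have hdom : IsDominating G {w} := hS.1
    have hPw : P ({w} : Set V) (G'.induce {w}) := by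
      rw [hG', induce_del_eq (B := {w})]
      · exact hS.2
      · rcases eq_or_ne u w with rfl | h
        · exact Or.inr (by simpa using fun hvu => hune hvu.symm)
        · exact Or.inl (by simpa using h)
    have habs : ∀ S' : Set V, IsDomPSet P G' S' → False := by
      intro S' hS'
      exact absurd (show S' ∈ {S | IsDomPSet P G' S} from hS')
        (by rw [hcon]; exact Set.notMem_empty _)
    by_cases hwu : w = u
    · subst hwu
      refine habs (insert v {w}) ⟨?_, ?_⟩
      · intro x hx
        simp only [Set.mem_insert_iff, Set.mem_singleton_iff, not_or] at hx
        refine ⟨w, Or.inr rfl, ?_⟩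
        obtain ⟨y, hy, hadj⟩ := hdom x (by simpa using hx.2)
        simp only [Set.mem_singleton_iff] at hy; subst hy
        rw [hG', del_adj]
        refine ⟨hadj, ?_⟩
        rintro (⟨h1', h2'⟩ | ⟨h1', h2'⟩)
        · exact hx.1 h2'
        · exact hune h1'
      · exact P_insert_isolated h1 h2 G' (C := {w}) (x := v)
          (by simpa using fun hvw => hune hvw.symm)
          (by intro c hc; simp only [Set.mem_singleton_iff] at hc; subst hc
              rw [hG', del_adj]; rintro ⟨-, hno⟩; exact hno (Or.inr ⟨rfl, rfl⟩)) hPw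
    · by_cases hwv : w = v
      · subst hwv
        refine habs (insert u {w}) ⟨?_, ?_⟩
        · intro x hx
          simp only [Set.mem_insert_iff, Set.mem_singleton_iff, not_or] at hx
          refine ⟨w, Or.inr rfl, ?_⟩
          obtain ⟨y, hy, hadj⟩ := hdom x (by simpa using hx.2)
          simp only [Set.mem_singleton_iff] at hy; subst hy
          rw [hG', del_adj]
          refine ⟨hadj, ?_⟩
          rintro (⟨h1', h2'⟩ | ⟨h1', h2'⟩)
          · exact hune h1'.symm
          · exact hx.1 h2'
        · exact P_insert_isolated h1 h2 G' (C := {w}) (x := u)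
            (by simpa using hune)
            (by intro c hc; simp only [Set.mem_singleton_iff] at hc; subst hc
                rw [hG', del_adj]; rintro ⟨-, hno⟩; exact hno (Or.inl ⟨rfl, rfl⟩)) hPw
      · refine habs {w} ⟨?_, hPw⟩
        intro x hx
        refine ⟨w, rfl, ?_⟩
        obtain ⟨y, hy, hadj⟩ := hdom x hx
        simp only [Set.mem_singleton_iff] at hy; subst hy
        rw [hG', del_adj]
        refine ⟨hadj, ?_⟩
        rintro (⟨h1', h2'⟩ | ⟨h1', h2'⟩)
        · exact hwu h1'
        · exact hwv h1'
  obtain ⟨S₀, hS₀, hcard⟩ := exists_gammaSet hne'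
  refine ⟨S₀, hS₀, hcard, ?_⟩
  by_contra hcon
  have hor : u ∉ S₀ ∨ v ∉ S₀ := by tauto
  have hSG : IsDomPSet P G S₀ := by
    constructor
    · intro x hx
      obtain ⟨y, hy, hadj⟩ := hS₀.1 x hx
      exact ⟨y, hy, ((del_adj (G := G) (u := u) (v := v)).1 hadj).1⟩
    · rw [← induce_del_eq hor]; exact hS₀.2
  have := gammaP_le hSG
  rw [hcard] at this
  omega

end Gamma
section Lower

lemma lower_B {P : GraphProp} {V : Type} [Fintype V] (h1 : Hereditary P) (h2 : ClosedUnderK1 P)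
    (G : SimpleGraph V) (u v : V) (he : G.Adj u v)
    (hcond : gammaP P G = gammaP P (G.deleteEdges {s(u, v)}) + 1)
    {t : ℕ} {T : Set (V ⊕ Fin t)} (hT : IsDomPSet P (subdiv G u v t) T) :
    gammaP P (G.deleteEdges {s(u, v)}) ≤ (Sum.inl ⁻¹' T).ncard := by
  classical
  set G' := G.deleteEdges {s(u, v)} with hG'
  set B : Set V := Sum.inl ⁻¹' T with hB
  -- P holds for the induced subgraph on B in G'
  have hsub : liftSet B t ⊆ T := by rintro x ⟨w, hw, rfl⟩; exact hw
  have hPB : P B (G'.induce B) :=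
    isoP h1.1.1 (liftIso G u v t B).symm (P_induce_subset h1 _ hsub hT.2)
  -- domination of vertices other than u, v
  have hdomB : ∀ w : V, w ∉ B → w ≠ u → w ≠ v → ∃ b ∈ B, G'.Adj b w := by
    intro w hw hwu hwv
    obtain ⟨s, hs, hadj⟩ := hT.1 (Sum.inl w) hw
    rcases s with b | i
    · rw [subdiv_adj_inl_inl] at hadj
      refine ⟨b, hs, ?_⟩
      rw [hG', del_adj]
      exact ⟨hadj.1, by rintro (⟨-, h'⟩ | ⟨-, h'⟩) <;> [exact hwv h'; exact hwu h']⟩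
    · rw [subdiv_adj_inr_inl] at hadj
      rcases hadj with ⟨h', -⟩ | ⟨h', -⟩
      · exact absurd h' hwu
      · exact absurd h' hwv
  have hGadj : ∀ a b : V, G'.Adj a b → G.Adj a b := by
    intro a b h; rw [hG', del_adj] at h; exact h.1
  have hune : u ≠ v := G.ne_of_adj he
  by_cases hbu : u ∉ B ∧ ∀ b ∈ B, ¬ G'.Adj b u
  · by_cases hvB : v ∈ B
    · -- B is a dominating P-set of G
      have hDG : IsDomPSet P G B := by
        refine ⟨?_, ?_⟩
        · intro x hx
          rcases eq_or_ne x u with rfl | hxu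
          · exact ⟨v, hvB, he.symm⟩
          · rcases eq_or_ne x v with rfl | hxv
            · exact absurd hvB hx
            · obtain ⟨b, hb, hadj⟩ := hdomB x hx hxu hxv
              exact ⟨b, hb, hGadj _ _ hadj⟩
        · rw [← induce_del_eq (Or.inl hbu.1)]; exact hPB
      have := gammaP_le hDG
      omega
    · -- insert u B is a dominating P-set of G
      have hDG : IsDomPSet P G (insert u B) := by
        refine ⟨?_, ?_⟩
        · intro x hx
          simp only [Set.mem_insert_iff, not_or] at hx
          rcases eq_or_ne x v with rfl | hxv
          · exact ⟨u, Or.inl rfl, he⟩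
          · obtain ⟨b, hb, hadj⟩ := hdomB x hx.2 hx.1 hxv
            exact ⟨b, Or.inr hb, hGadj _ _ hadj⟩
        · refine P_insert_isolated h1 h2 G hbu.1 ?_ ?_
          · intro b hb hadj
            rcases eq_or_ne b v with rfl | hbv
            · exact hvB hb
            · refine hbu.2 b hb ?_
              rw [hG', del_adj]
              exact ⟨hadj.symm, by rintro (⟨-, h'⟩ | ⟨h', -⟩) <;> [exact hune h'; exact hbv h']⟩
          · rw [← induce_del_eq (Or.inl hbu.1)]; exact hPB
      have := gammaP_le hDG
      have hcard : (insert u B).ncard = B.ncard + 1 :=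
        Set.ncard_insert_of_notMem hbu.1 (Set.toFinite B)
      omega
  · rw [not_and_or, not_not] at hbu
    by_cases hbv : v ∉ B ∧ ∀ b ∈ B, ¬ G'.Adj b v
    · by_cases huB : u ∈ B
      · -- B is a dominating P-set of G
        have hDG : IsDomPSet P G B := by
          refine ⟨?_, ?_⟩
          · intro x hx
            rcases eq_or_ne x v with rfl | hxv
            · exact ⟨u, huB, he⟩
            · rcases eq_or_ne x u with rfl | hxu
              · exact absurd huB hx
              · obtain ⟨b, hb, hadj⟩ := hdomB x hx hxu hxv
                exact ⟨b, hb, hGadj _ _ hadj⟩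
          · rw [← induce_del_eq (Or.inr hbv.1)]; exact hPB
        have := gammaP_le hDG
        omega
      · -- insert v B is a dominating P-set of G
        have hDG : IsDomPSet P G (insert v B) := by
          refine ⟨?_, ?_⟩
          · intro x hx
            simp only [Set.mem_insert_iff, not_or] at hx
            rcases eq_or_ne x u with rfl | hxu
            · exact ⟨v, Or.inl rfl, he.symm⟩
            · obtain ⟨b, hb, hadj⟩ := hdomB x hx.2 hxu hx.1
              exact ⟨b, Or.inr hb, hGadj _ _ hadj⟩
          · refine P_insert_isolated h1 h2 G hbv.1 ?_ ?_
            · intro b hb hadj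
              rcases eq_or_ne b u with rfl | hbu'
              · exact huB hb
              · refine hbv.2 b hb ?_
                rw [hG', del_adj]
                exact ⟨hadj.symm, by rintro (⟨h', -⟩ | ⟨-, h'⟩) <;> [exact hbu' h'; exact hune h'.symm]⟩
            · rw [← induce_del_eq (Or.inr hbv.1)]; exact hPB
        have := gammaP_le hDG
        have hcard : (insert v B).ncard = B.ncard + 1 :=
          Set.ncard_insert_of_notMem hbv.1 (Set.toFinite B)
        omega
    · -- B is a dominating P-set of G'
      rw [not_and_or, not_not] at hbv
      have hbu' : u ∉ B → ∃ b ∈ B, G'.Adj b u := by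
        intro hu
        rcases hbu with h | h
        · exact absurd h hu
        · push_neg at h; exact h
      have hbv' : v ∉ B → ∃ b ∈ B, G'.Adj b v := by
        intro hv
        rcases hbv with h | h
        · exact absurd h hv
        · push_neg at h; exact h
      have hDG : IsDomPSet P G' B := by
        refine ⟨?_, hPB⟩
        intro x hx
        rcases eq_or_ne x u with rfl | hxu
        · exact hbu' hx
        · rcases eq_or_ne x v with rfl | hxv
          · exact hbv' hx
          · exact hdomB x hx hxu hxv
      exact gammaP_le hDG

end Lower
section Upper

variable {V : Type} {G : SimpleGraph V} {u v : V}

lemma lift_dom_inl {S₀ : Set V} (hdom : IsDominating (G.deleteEdges {s(u, v)}) S₀)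
    {t : ℕ} {C : Set (V ⊕ Fin t)} (hsub : liftSet S₀ t ⊆ C) :
    ∀ x : V, Sum.inl x ∉ C → ∃ s ∈ C, (subdiv G u v t).Adj s (Sum.inl x) := by
  intro x hx
  have hxS : x ∉ S₀ := fun h => hx (hsub (mem_liftSet_inl.2 h))
  obtain ⟨b, hb, hadj⟩ := hdom x hxS
  rw [del_adj] at hadj
  exact ⟨Sum.inl b, hsub (mem_liftSet_inl.2 hb), by rw [subdiv_adj_inl_inl]; exact hadj⟩

end Upper

set_option maxHeartbeats 4000000 in
/-- if `γ_H(G) = γ_H(G − e) + 1` then the values of `γ_H(G_{e,t})`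
for `t = 1, …, 6` are as given. -/
theorem gammaP_subdiv_values (P : GraphProp) (h1 : Hereditary P) (h2 : ClosedUnderK1 P)
    {V : Type} [Fintype V] (G : SimpleGraph V) (u v : V) (he : G.Adj u v)
    (hcond : gammaP P G = gammaP P (G.deleteEdges {s(u, v)}) + 1) :
    gammaP P (subdiv G u v 1) = gammaP P G - 1 ∧
    gammaP P (subdiv G u v 2) = gammaP P G - 1 ∧
    gammaP P (subdiv G u v 3) = gammaP P G ∧
    gammaP P (subdiv G u v 4) = gammaP P G ∧
    gammaP P (subdiv G u v 5) = gammaP P G ∧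
    gammaP P (subdiv G u v 6) = gammaP P G + 1 := by
  classical
  obtain ⟨S₀, hS₀, hS₀card, huS₀, hvS₀⟩ := exists_S0 h1 h2 G u v he hcond
  set k := gammaP P (G.deleteEdges {s(u, v)}) with hk
  -- generic lower bound via counting
  have count1 : ∀ t : ℕ, ∀ T : Set (V ⊕ Fin t), (Sum.inl ⁻¹' T).ncard ≤ T.ncard := by
    intro t T
    have hsub' : liftSet (Sum.inl ⁻¹' T) t ⊆ T := by rintro x ⟨w, hw, rfl⟩; exact hw
    have := Set.ncard_le_ncard hsub' (Set.toFinite T)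
    rwa [ncard_liftSet] at this
  have count2 : ∀ t : ℕ, ∀ T : Set (V ⊕ Fin t), ∀ j : Fin t, Sum.inr j ∈ T →
      (Sum.inl ⁻¹' T).ncard + 1 ≤ T.ncard := by
    intro t T j hj
    have hsub' : insert (Sum.inr j) (liftSet (Sum.inl ⁻¹' T) t) ⊆ T := by
      rintro x (rfl | ⟨w, hw, rfl⟩)
      · exact hj
      · exact hw
    have := Set.ncard_le_ncard hsub' (Set.toFinite T)
    rwa [Set.ncard_insert_of_notMem mem_liftSet_inr (Set.toFinite _), ncard_liftSet] at this
  have count3 : ∀ t : ℕ, ∀ T : Set (V ⊕ Fin t), ∀ j j' : Fin t, j ≠ j' →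
      Sum.inr j ∈ T → Sum.inr j' ∈ T → (Sum.inl ⁻¹' T).ncard + 2 ≤ T.ncard := by
    intro t T j j' hne hj hj'
    have hsub' : insert (Sum.inr j) (insert (Sum.inr j') (liftSet (Sum.inl ⁻¹' T) t)) ⊆ T := by
      rintro x (rfl | rfl | ⟨w, hw, rfl⟩)
      · exact hj
      · exact hj'
      · exact hw
    have hc := Set.ncard_le_ncard hsub' (Set.toFinite T)
    rw [Set.ncard_insert_of_notMem ?_ (Set.toFinite _),
        Set.ncard_insert_of_notMem mem_liftSet_inr (Set.toFinite _), ncard_liftSet] at hc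
    · omega
    · rintro (h | ⟨w, hw, h⟩)
      · exact hne (Sum.inr_injective h)
      · exact Sum.inl_ne_inr h.symm
  -- upper-bound constructions
  -- t = 1
  have hC1 : IsDomPSet P (subdiv G u v 1) (liftSet S₀ 1) := by
    constructor
    · rintro (x | i) hx
      · exact lift_dom_inl hS₀.1 Set.Subset.rfl x hx
      · fin_cases i
        exact ⟨Sum.inl u, mem_liftSet_inl.2 huS₀,
          by rw [subdiv_adj_inl_inr]; exact Or.inl ⟨rfl, rfl⟩⟩
    · exact isoP h1.1.1 (liftIso G u v 1 S₀) hS₀.2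
  -- t = 2
  have hC2 : IsDomPSet P (subdiv G u v 2) (liftSet S₀ 2) := by
    constructor
    · rintro (x | i) hx
      · exact lift_dom_inl hS₀.1 Set.Subset.rfl x hx
      · fin_cases i
        · exact ⟨Sum.inl u, mem_liftSet_inl.2 huS₀,
            by rw [subdiv_adj_inl_inr]; exact Or.inl ⟨rfl, rfl⟩⟩
        · exact ⟨Sum.inl v, mem_liftSet_inl.2 hvS₀,
            by rw [subdiv_adj_inl_inr]; exact Or.inr ⟨rfl, rfl⟩⟩
    · exact isoP h1.1.1 (liftIso G u v 2 S₀) hS₀.2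
  -- t = 3
  have hC3 : IsDomPSet P (subdiv G u v 3) (insert (Sum.inr 1) (liftSet S₀ 3)) := by
    constructor
    · rintro (x | i) hx
      · obtain ⟨s, hs, hadj⟩ := lift_dom_inl hS₀.1 (Set.subset_insert _ _) x hx
        exact ⟨s, hs, hadj⟩
      · fin_cases i
        · exact ⟨Sum.inl u, Or.inr (mem_liftSet_inl.2 huS₀),
            by rw [subdiv_adj_inl_inr]; exact Or.inl ⟨rfl, rfl⟩⟩
        · exact absurd (Set.mem_insert _ _) hx
        · exact ⟨Sum.inr 1, Set.mem_insert _ _,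
            by rw [subdiv_adj_inr_inr]; exact Or.inl rfl⟩
    · refine P_insert_isolated h1 h2 _ mem_liftSet_inr ?_
        (isoP h1.1.1 (liftIso G u v 3 S₀) hS₀.2)
      rintro c ⟨w, hw, rfl⟩ hadj
      rw [subdiv_adj_inr_inl] at hadj
      rcases hadj with ⟨-, h'⟩ | ⟨-, h'⟩ <;> exact absurd h' (by decide)
  -- t = 4
  have hC4 : IsDomPSet P (subdiv G u v 4) (insert (Sum.inr 1) (liftSet S₀ 4)) := by
    constructor
    · rintro (x | i) hx
      · obtain ⟨s, hs, hadj⟩ := lift_dom_inl hS₀.1 (Set.subset_insert _ _) x hx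
        exact ⟨s, hs, hadj⟩
      · fin_cases i
        · exact ⟨Sum.inl u, Or.inr (mem_liftSet_inl.2 huS₀),
            by rw [subdiv_adj_inl_inr]; exact Or.inl ⟨rfl, rfl⟩⟩
        · exact absurd (Set.mem_insert _ _) hx
        · exact ⟨Sum.inr 1, Set.mem_insert _ _,
            by rw [subdiv_adj_inr_inr]; exact Or.inl rfl⟩
        · exact ⟨Sum.inl v, Or.inr (mem_liftSet_inl.2 hvS₀),
            by rw [subdiv_adj_inl_inr]; exact Or.inr ⟨rfl, rfl⟩⟩
    · refine P_insert_isolated h1 h2 _ mem_liftSet_inr ?_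
        (isoP h1.1.1 (liftIso G u v 4 S₀) hS₀.2)
      rintro c ⟨w, hw, rfl⟩ hadj
      rw [subdiv_adj_inr_inl] at hadj
      rcases hadj with ⟨-, h'⟩ | ⟨-, h'⟩ <;> exact absurd h' (by decide)
  -- t = 5
  have hC5 : IsDomPSet P (subdiv G u v 5) (insert (Sum.inr 2) (liftSet S₀ 5)) := by
    constructor
    · rintro (x | i) hx
      · obtain ⟨s, hs, hadj⟩ := lift_dom_inl hS₀.1 (Set.subset_insert _ _) x hx
        exact ⟨s, hs, hadj⟩
      · fin_cases i
        · exact ⟨Sum.inl u, Or.inr (mem_liftSet_inl.2 huS₀),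
            by rw [subdiv_adj_inl_inr]; exact Or.inl ⟨rfl, rfl⟩⟩
        · exact ⟨Sum.inr 2, Set.mem_insert _ _,
            by rw [subdiv_adj_inr_inr]; exact Or.inr rfl⟩
        · exact absurd (Set.mem_insert _ _) hx
        · exact ⟨Sum.inr 2, Set.mem_insert _ _,
            by rw [subdiv_adj_inr_inr]; exact Or.inl rfl⟩
        · exact ⟨Sum.inl v, Or.inr (mem_liftSet_inl.2 hvS₀),
            by rw [subdiv_adj_inl_inr]; exact Or.inr ⟨rfl, rfl⟩⟩
    · refine P_insert_isolated h1 h2 _ mem_liftSet_inr ?_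
        (isoP h1.1.1 (liftIso G u v 5 S₀) hS₀.2)
      rintro c ⟨w, hw, rfl⟩ hadj
      rw [subdiv_adj_inr_inl] at hadj
      rcases hadj with ⟨-, h'⟩ | ⟨-, h'⟩ <;> exact absurd h' (by decide)
  -- t = 6
  have hC6 : IsDomPSet P (subdiv G u v 6)
      (insert (Sum.inr 4) (insert (Sum.inr 1) (liftSet S₀ 6))) := by
    constructor
    · rintro (x | i) hx
      · obtain ⟨s, hs, hadj⟩ := lift_dom_inl hS₀.1
          ((Set.subset_insert _ _).trans (Set.subset_insert _ _)) x hx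
        exact ⟨s, hs, hadj⟩
      · fin_cases i
        · exact ⟨Sum.inl u, Or.inr (Or.inr (mem_liftSet_inl.2 huS₀)),
            by rw [subdiv_adj_inl_inr]; exact Or.inl ⟨rfl, rfl⟩⟩
        · exact absurd (Or.inr (Set.mem_insert _ _)) hx
        · exact ⟨Sum.inr 1, Or.inr (Set.mem_insert _ _),
            by rw [subdiv_adj_inr_inr]; exact Or.inl rfl⟩
        · exact ⟨Sum.inr 4, Set.mem_insert _ _,
            by rw [subdiv_adj_inr_inr]; exact Or.inr rfl⟩
        · exact absurd (Set.mem_insert _ _) hx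
        · exact ⟨Sum.inr 4, Set.mem_insert _ _,
            by rw [subdiv_adj_inr_inr]; exact Or.inl rfl⟩
    · have base : P ↑(insert (Sum.inr 1 : V ⊕ Fin 6) (liftSet S₀ 6))
          ((subdiv G u v 6).induce (insert (Sum.inr 1) (liftSet S₀ 6))) := by
        refine P_insert_isolated h1 h2 _ mem_liftSet_inr ?_
          (isoP h1.1.1 (liftIso G u v 6 S₀) hS₀.2)
        rintro c ⟨w, hw, rfl⟩ hadj
        rw [subdiv_adj_inr_inl] at hadj
        rcases hadj with ⟨-, h'⟩ | ⟨-, h'⟩ <;> exact absurd h' (by decide)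
      refine P_insert_isolated h1 h2 _ ?_ ?_ base
      · rintro (h | ⟨w, hw, h⟩)
        · exact absurd (Sum.inr_injective h) (by decide)
        · exact Sum.inl_ne_inr h.symm
      · rintro c (rfl | ⟨w, hw, rfl⟩) hadj
        · rw [subdiv_adj_inr_inr] at hadj
          rcases hadj with h' | h' <;> exact absurd h' (by decide)
        · rw [subdiv_adj_inr_inl] at hadj
          rcases hadj with ⟨-, h'⟩ | ⟨-, h'⟩ <;> exact absurd h' (by decide)
  -- sizes of the constructions
  have hs1 : (liftSet S₀ 1).ncard = k := by rw [ncard_liftSet, hS₀card]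
  have hs2 : (liftSet S₀ 2).ncard = k := by rw [ncard_liftSet, hS₀card]
  have hs3 : (insert (Sum.inr 1 : V ⊕ Fin 3) (liftSet S₀ 3)).ncard = k + 1 := by
    rw [Set.ncard_insert_of_notMem mem_liftSet_inr (Set.toFinite _), ncard_liftSet, hS₀card]
  have hs4 : (insert (Sum.inr 1 : V ⊕ Fin 4) (liftSet S₀ 4)).ncard = k + 1 := by
    rw [Set.ncard_insert_of_notMem mem_liftSet_inr (Set.toFinite _), ncard_liftSet, hS₀card]
  have hs5 : (insert (Sum.inr 2 : V ⊕ Fin 5) (liftSet S₀ 5)).ncard = k + 1 := by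
    rw [Set.ncard_insert_of_notMem mem_liftSet_inr (Set.toFinite _), ncard_liftSet, hS₀card]
  have hs6 : (insert (Sum.inr 4 : V ⊕ Fin 6) (insert (Sum.inr 1) (liftSet S₀ 6))).ncard
      = k + 2 := by
    rw [Set.ncard_insert_of_notMem ?_ (Set.toFinite _),
        Set.ncard_insert_of_notMem mem_liftSet_inr (Set.toFinite _), ncard_liftSet, hS₀card]
    · rintro (h | ⟨w, hw, h⟩)
      · exact absurd (Sum.inr_injective h) (by decide)
      · exact Sum.inl_ne_inr h.symm
  -- lower bounds
  have hge1 : k ≤ gammaP P (subdiv G u v 1) := by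
    obtain ⟨T, hT, hTcard⟩ := exists_gammaSet ⟨_, hC1⟩
    have := lower_B h1 h2 G u v he hcond hT
    have := count1 1 T
    omega
  have hge2 : k ≤ gammaP P (subdiv G u v 2) := by
    obtain ⟨T, hT, hTcard⟩ := exists_gammaSet ⟨_, hC2⟩
    have := lower_B h1 h2 G u v he hcond hT
    have := count1 2 T
    omega
  have midvert : ∀ t : ℕ, ∀ T : Set (V ⊕ Fin t), ∀ i : Fin t,
      IsDomPSet P (subdiv G u v t) T → (i : ℕ) ≠ 0 → (i : ℕ) + 1 ≠ t →
      ∃ j : Fin t, Sum.inr j ∈ T ∧ ((i : ℕ) + 1 = j ∨ (j : ℕ) + 1 = i ∨ j = i) := by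
    intro t T i hT hi0 hit
    by_cases h : Sum.inr i ∈ T
    · exact ⟨i, h, Or.inr (Or.inr rfl)⟩
    · obtain ⟨s, hs, hadj⟩ := hT.1 (Sum.inr i) h
      rcases s with a | j
      · rw [subdiv_adj_inl_inr] at hadj
        rcases hadj with ⟨-, h'⟩ | ⟨-, h'⟩
        · exact absurd h' hi0
        · exact absurd h' hit
      · rw [subdiv_adj_inr_inr] at hadj
        rcases hadj with h' | h'
        · exact ⟨j, hs, Or.inr (Or.inl h')⟩
        · exact ⟨j, hs, Or.inl h'⟩
  have hge3 : k + 1 ≤ gammaP P (subdiv G u v 3) := by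
    obtain ⟨T, hT, hTcard⟩ := exists_gammaSet ⟨_, hC3⟩
    obtain ⟨j, hjT, -⟩ := midvert 3 T 1 hT (by decide) (by decide)
    have := lower_B h1 h2 G u v he hcond hT
    have := count2 3 T j hjT
    omega
  have hge4 : k + 1 ≤ gammaP P (subdiv G u v 4) := by
    obtain ⟨T, hT, hTcard⟩ := exists_gammaSet ⟨_, hC4⟩
    obtain ⟨j, hjT, -⟩ := midvert 4 T 1 hT (by decide) (by decide)
    have := lower_B h1 h2 G u v he hcond hT
    have := count2 4 T j hjT
    omega
  have hge5 : k + 1 ≤ gammaP P (subdiv G u v 5) := by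
    obtain ⟨T, hT, hTcard⟩ := exists_gammaSet ⟨_, hC5⟩
    obtain ⟨j, hjT, -⟩ := midvert 5 T 1 hT (by decide) (by decide)
    have := lower_B h1 h2 G u v he hcond hT
    have := count2 5 T j hjT
    omega
  have hge6 : k + 2 ≤ gammaP P (subdiv G u v 6) := by
    obtain ⟨T, hT, hTcard⟩ := exists_gammaSet ⟨_, hC6⟩
    obtain ⟨j, hjT, hj⟩ := midvert 6 T 1 hT (by decide) (by decide)
    obtain ⟨j', hjT', hj'⟩ := midvert 6 T 4 hT (by decide) (by decide)
    have hne : j ≠ j' := by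
      have e1 : ((1 : Fin 6) : ℕ) = 1 := rfl
      have e4 : ((4 : Fin 6) : ℕ) = 4 := rfl
      intro hEq
      have : (j : ℕ) = (j' : ℕ) := congrArg Fin.val hEq
      rcases hj with h' | h' | h' <;> rcases hj' with h'' | h'' | h'' <;>
        first
          | omega
          | (rw [h'] at this; omega)
          | (rw [h''] at this; omega)
          | (rw [h', h''] at this; omega)
    have := lower_B h1 h2 G u v he hcond hT
    have := count3 6 T j j' hne hjT hjT'
    omega
  -- upper bounds
  have hle1 := gammaP_le hC1
  have hle2 := gammaP_le hC2
  have hle3 := gammaP_le hC3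
  have hle4 := gammaP_le hC4
  have hle5 := gammaP_le hC5
  have hle6 := gammaP_le hC6
  rw [hs1] at hle1
  rw [hs2] at hle2
  rw [hs3] at hle3
  rw [hs4] at hle4
  rw [hs5] at hle5
  rw [hs6] at hle6
  refine ⟨?_, ?_, ?_, ?_, ?_, ?_⟩
  · rw [le_antisymm hle1 hge1, hcond, Nat.add_sub_cancel]
  · rw [le_antisymm hle2 hge2, hcond, Nat.add_sub_cancel]
  · rw [le_antisymm hle3 hge3, hcond]
  · rw [le_antisymm hle4 hge4, hcond]
  · rw [le_antisymm hle5 hge5, hcond]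
  · rw [le_antisymm hle6 hge6, hcond]
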